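/- Let d ≥ 3 be an integer and D ≥ 1 a real number. Then |{(j,k) ∈ ℕ² : 0 < k^d − j^d < 5D}| ≤ 16 D^{2/d}. -/

import Mathlib

open Finset

lemma pow_sub_pow_ge (n : ℕ) (a b : ℝ) (h0 : 0 ≤ a) (hab : a ≤ b) :
    ((n : ℝ) + 1) * (b - a) * a ^ n ≤ b ^ (n + 1) - a ^ (n + 1) := by
  have hsum : ((n : ℝ) + 1) * a ^ n ≤ ∑ i ∈ range (n + 1), b ^ i * a ^ (n + 1 - 1 - i) := by
    have hterm : ∀ i ∈ range (n + 1), a ^ n ≤ b ^ i * a ^ (n + 1 - 1 - i) := by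
      intro i hi
      have hi' : i ≤ n := Nat.lt_succ_iff.mp (mem_range.mp hi)
      have h1 : a ^ n = a ^ i * a ^ (n + 1 - 1 - i) := by
        rw [← pow_add]; congr 1; omega
      rw [h1]
      exact mul_le_mul_of_nonneg_right (pow_le_pow_left₀ h0 hab i) (pow_nonneg h0 _)
    calc ((n : ℝ) + 1) * a ^ n = ∑ _i ∈ range (n + 1), a ^ n := by
          rw [Finset.sum_const, card_range]; push_cast; ring
      _ ≤ _ := Finset.sum_le_sum hterm
  calc ((n : ℝ) + 1) * (b - a) * a ^ n = (((n : ℝ) + 1) * a ^ n) * (b - a) := by ring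
    _ ≤ (∑ i ∈ range (n + 1), b ^ i * a ^ (n + 1 - 1 - i)) * (b - a) :=
        mul_le_mul_of_nonneg_right hsum (by linarith)
    _ = b ^ (n + 1) - a ^ (n + 1) := geom_sum₂_mul b a (n + 1)

lemma tele_step (e : ℕ) (a : ℝ) (ha : 1 ≤ a) :
    ((e : ℝ) + 1) / (a + 1) ^ (e + 2) ≤ 1 / a ^ (e + 1) - 1 / (a + 1) ^ (e + 1) := by
  have h0 : (0:ℝ) ≤ a := by linarith
  have key : ((e : ℝ) + 1) * a ^ e ≤ (a + 1) ^ (e + 1) - a ^ (e + 1) := by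
    have h := pow_sub_pow_ge e a (a + 1) h0 (by linarith)
    calc ((e : ℝ) + 1) * a ^ e = ((e : ℝ) + 1) * ((a + 1) - a) * a ^ e := by ring
      _ ≤ _ := h
  have hA : (0:ℝ) < a ^ (e + 1) := by positivity
  have hB : (0:ℝ) < (a + 1) ^ (e + 1) := by positivity
  have hC : (0:ℝ) < (a + 1) ^ (e + 2) := by positivity
  rw [div_sub_div _ _ hA.ne' hB.ne', div_le_div_iff₀ hC (by positivity)]
  have hae : (0:ℝ) ≤ a ^ e := by positivity
  have hexp1 : a ^ (e + 1) = a ^ e * a := pow_succ a e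
  have hexp2 : (a + 1) ^ (e + 2) = (a + 1) ^ (e + 1) * (a + 1) := pow_succ (a + 1) (e + 1)
  have hBA : (0:ℝ) ≤ (a + 1) ^ (e + 1) - a ^ (e + 1) := le_trans (by positivity) key
  have haB : a * (a + 1) ^ (e + 1) ≤ (a + 1) ^ (e + 2) := by
    rw [hexp2]; nlinarith
  calc ((e : ℝ) + 1) * (a ^ (e + 1) * (a + 1) ^ (e + 1))
      = (((e : ℝ) + 1) * a ^ e) * (a * (a + 1) ^ (e + 1)) := by rw [hexp1]; ring
    _ ≤ ((a + 1) ^ (e + 1) - a ^ (e + 1)) * (a * (a + 1) ^ (e + 1)) := by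
        apply mul_le_mul_of_nonneg_right key; positivity
    _ ≤ ((a + 1) ^ (e + 1) - a ^ (e + 1)) * (a + 1) ^ (e + 2) :=
        mul_le_mul_of_nonneg_left haB hBA
    _ = (1 * (a + 1) ^ (e + 1) - a ^ (e + 1) * 1) * (a + 1) ^ (e + 2) := by ring

lemma tele_sum (e J : ℕ) (hJ : 1 ≤ J) :
    ∀ N, J ≤ N →
      ∑ j ∈ Icc (J + 1) N, ((e : ℝ) + 1) / (j : ℝ) ^ (e + 2)
        ≤ 1 / (J : ℝ) ^ (e + 1) - 1 / (N : ℝ) ^ (e + 1) := by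
  refine Nat.le_induction ?_ ?_
  · rw [Finset.Icc_eq_empty (by omega)]
    simp
  · intro N hN ih
    have hins : Finset.Icc (J + 1) (N + 1) = insert (N + 1) (Finset.Icc (J + 1) N) :=
      (Finset.insert_Icc_right_eq_Icc_add_one (by omega)).symm
    rw [hins, Finset.sum_insert (by simp)]
    have hstep := tele_step e (N : ℝ) (by exact_mod_cast hJ.trans hN)
    have hcast : ((N : ℝ) + 1) = ((N + 1 : ℕ) : ℝ) := by push_cast; ring
    rw [hcast] at hstep
    linarith

set_option maxHeartbeats 1000000 in
theorem lattice_points_below_curve (d : ℕ) (hd : 3 ≤ d) (D : ℝ) (hD : 1 ≤ D) :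
    (({p : ℕ × ℕ | 0 < p.1 ∧ 0 < p.2 ∧
        0 < (p.2 : ℝ) ^ d - (p.1 : ℝ) ^ d ∧
        (p.2 : ℝ) ^ d - (p.1 : ℝ) ^ d < 5 * D}).ncard : ℝ)
      ≤ 16 * D ^ ((2 : ℝ) / d) := by
  obtain ⟨e, rfl⟩ : ∃ e, d = e + 3 := ⟨d - 3, by omega⟩
  have hD0 : (0:ℝ) < D := by linarith
  set T : ℝ := D ^ ((1:ℝ) / (e + 3)) with hT
  have hT0 : 0 < T := Real.rpow_pos_of_pos hD0 _
  have hT1 : 1 ≤ T := Real.one_le_rpow hD (by positivity)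
  have hTd : T ^ (e + 3) = D := by
    rw [hT, ← Real.rpow_natCast (D ^ ((1:ℝ)/(e+3))) (e + 3), ← Real.rpow_mul hD0.le]
    rw [show (1:ℝ) / ((e:ℝ) + 3) * ((e + 3 : ℕ) : ℝ) = 1 by push_cast; field_simp, Real.rpow_one]
  have hT2 : T ^ 2 = D ^ ((2:ℝ) / ((e:ℝ) + 3)) := by
    rw [hT, ← Real.rpow_natCast (D ^ ((1:ℝ)/(e+3))) 2, ← Real.rpow_mul hD0.le]
    congr 1
    push_cast
    ring
  set J : ℕ := ⌊T⌋₊ with hJdef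
  have hJ1 : 1 ≤ J := Nat.le_floor (by exact_mod_cast hT1)
  have hJT : (J : ℝ) ≤ T := Nat.floor_le hT0.le
  have hTJ : T < (J : ℝ) + 1 := Nat.lt_floor_add_one T
  set K : ℕ := ⌊6 * T⌋₊ with hKdef
  have hK : (K : ℝ) ≤ 6 * T := Nat.floor_le (by positivity)
  set N : ℕ := ⌊(2 * D) ^ ((1:ℝ) / (e + 2))⌋₊ with hNdef
  set M : ℕ → ℕ := fun j => ⌊5 * D / (3 * (j : ℝ) ^ (e + 2))⌋₊ with hMdef
  set F1 : Finset (ℕ × ℕ) := Finset.Icc 1 J ×ˢ Finset.Icc 1 K with hF1def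
  set F2 : Finset (ℕ × ℕ) :=
    (Finset.Icc (J + 1) N).biUnion (fun j => {j} ×ˢ Finset.Icc (j + 1) (j + M j)) with hF2def
  set S : Set (ℕ × ℕ) := {p : ℕ × ℕ | 0 < p.1 ∧ 0 < p.2 ∧
        0 < (p.2 : ℝ) ^ (e + 3) - (p.1 : ℝ) ^ (e + 3) ∧
        (p.2 : ℝ) ^ (e + 3) - (p.1 : ℝ) ^ (e + 3) < 5 * D} with hSdef
  have hsub : S ⊆ ↑(F1 ∪ F2) := by
    rintro ⟨j, k⟩ ⟨hj, hk, h1, h2⟩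
    simp only at h1 h2
    have hj1 : (1:ℝ) ≤ (j:ℝ) := by exact_mod_cast hj
    have hjk : j < k := by
      by_contra hc
      push_neg at hc
      have : (k:ℝ) ^ (e + 3) ≤ (j:ℝ) ^ (e + 3) :=
        pow_le_pow_left₀ (by positivity) (by exact_mod_cast hc) _
      linarith
    have hjkR : (j:ℝ) + 1 ≤ (k:ℝ) := by exact_mod_cast hjk
    have hjpow : (1:ℝ) ≤ (j:ℝ) ^ (e + 2) := by simpa using pow_le_pow_left₀ (by norm_num : (0:ℝ) ≤ 1) hj1 (e + 2)
    have hmain : ((k:ℝ) - j) * ((e:ℝ) + 3) * (j:ℝ) ^ (e + 2)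
        ≤ (k:ℝ) ^ (e + 3) - (j:ℝ) ^ (e + 3) := by
      have h := pow_sub_pow_ge (e + 2) (j:ℝ) (k:ℝ) (by positivity) (by linarith)
      push_cast at h ⊢
      calc ((k:ℝ) - j) * ((e:ℝ) + 3) * (j:ℝ) ^ (e + 2)
          = (((e:ℝ) + 2) + 1) * ((k:ℝ) - j) * (j:ℝ) ^ (e + 2) := by ring
        _ ≤ _ := h
    simp only [Finset.coe_union, Set.mem_union]
    rcases le_or_gt j J with hcase | hcase
    · left
      simp only [hF1def, Finset.coe_product, Set.mem_prod, Finset.mem_coe, Finset.mem_Icc]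
      refine ⟨⟨hj, hcase⟩, hk, ?_⟩
      apply Nat.le_floor
      by_contra hc
      push_neg at hc
      have h6 : (6 * T) ^ (e + 3) ≤ (k:ℝ) ^ (e + 3) :=
        pow_le_pow_left₀ (by positivity) hc.le _
      have hjT : (j:ℝ) ^ (e + 3) ≤ T ^ (e + 3) := by
        apply pow_le_pow_left₀ (by positivity)
        calc (j:ℝ) ≤ (J:ℝ) := by exact_mod_cast hcase
          _ ≤ T := hJT
      have h6e : (6 : ℝ) ≤ 6 ^ (e + 3) := by
        calc (6:ℝ) = 6 ^ 1 := (pow_one 6).symm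
          _ ≤ 6 ^ (e + 3) := pow_le_pow_right₀ (by norm_num) (by omega)
      have : (6 * T) ^ (e + 3) = 6 ^ (e + 3) * T ^ (e + 3) := mul_pow 6 T (e + 3)
      have hTpos : 0 < T ^ (e + 3) := by positivity
      nlinarith
    · right
      simp only [hF2def, Finset.coe_biUnion, Set.mem_iUnion, Finset.mem_coe,
        Finset.mem_biUnion]
      refine ⟨j, ?_, ?_⟩
      · rw [Finset.mem_Icc]
        constructor
        · omega
        · -- j ≤ N
          have h3 : 3 * (j:ℝ) ^ (e + 2) ≤ ((k:ℝ) - j) * ((e:ℝ) + 3) * (j:ℝ) ^ (e + 2) := by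
            have hm1 : (1:ℝ) ≤ (k:ℝ) - j := by linarith
            have hcoef : (3:ℝ) ≤ ((k:ℝ) - j) * ((e:ℝ) + 3) := by
              nlinarith [mul_nonneg (sub_nonneg.mpr hm1) (by positivity : (0:ℝ) ≤ (e:ℝ))]
            calc 3 * (j:ℝ) ^ (e + 2) ≤ (((k:ℝ) - j) * ((e:ℝ) + 3)) * (j:ℝ) ^ (e + 2) :=
                  mul_le_mul_of_nonneg_right hcoef (by positivity)
              _ = _ := by ring
          have hjlt : (j:ℝ) ^ (e + 2) < 2 * D := by linarith
          apply Nat.le_floor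
          by_contra hc
          push_neg at hc
          have hrpos : (0:ℝ) < (2 * D) ^ ((1:ℝ) / (e + 2)) := by positivity
          have := pow_le_pow_left₀ hrpos.le hc.le (e + 2)
          rw [← Real.rpow_natCast ((2 * D) ^ ((1:ℝ)/(e+2))) (e + 2),
            ← Real.rpow_mul (by positivity)] at this
          rw [show (1:ℝ) / ((e:ℝ) + 2) * ((e + 2 : ℕ) : ℝ) = 1 by push_cast; field_simp,
            Real.rpow_one] at this
          linarith
      · rw [Finset.mem_product, Finset.mem_singleton, Finset.mem_Icc]
        refine ⟨rfl, hjk, ?_⟩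
        have hmM : k - j ≤ M j := by
          apply Nat.le_floor
          have hc : ((k - j : ℕ) : ℝ) = (k:ℝ) - j := by
            push_cast [Nat.cast_sub hjk.le]; ring
          rw [hc]
          rw [le_div_iff₀ (by positivity)]
          have h3' : ((k:ℝ) - j) * (3 * (j:ℝ) ^ (e + 2))
              ≤ ((k:ℝ) - j) * (((e:ℝ) + 3) * (j:ℝ) ^ (e + 2)) := by
            apply mul_le_mul_of_nonneg_left _ (by linarith)
            apply mul_le_mul_of_nonneg_right (by norm_num) (by positivity)
          calc ((k:ℝ) - j) * (3 * (j:ℝ) ^ (e + 2))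
              ≤ ((k:ℝ) - j) * ((e:ℝ) + 3) * (j:ℝ) ^ (e + 2) := by linarith [h3']
            _ ≤ (k:ℝ) ^ (e + 3) - (j:ℝ) ^ (e + 3) := hmain
            _ ≤ 5 * D := h2.le
        omega
  have hfin := (F1 ∪ F2).finite_toSet
  have hcard : S.ncard ≤ (F1 ∪ F2).card := by
    have h := Set.ncard_le_ncard hsub hfin
    rwa [Set.ncard_coe_finset] at h
  have hF1card : F1.card = J * K := by
    rw [hF1def, Finset.card_product, Nat.card_Icc, Nat.card_Icc,
      Nat.add_sub_cancel, Nat.add_sub_cancel]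
  have hF2n : F2.card ≤ ∑ j ∈ Finset.Icc (J + 1) N, M j := by
    refine le_trans Finset.card_biUnion_le (Finset.sum_le_sum ?_)
    intro j _
    rw [Finset.card_product, Finset.card_singleton, Nat.card_Icc]
    omega
  have hDT1 : D / T ^ (e + 2) = T := by
    rw [← hTd, pow_succ]
    field_simp
  have hDT2 : D / T ^ (e + 1) = T ^ 2 := by
    rw [← hTd, show e + 3 = (e + 1) + 2 by omega, pow_add]
    field_simp
  have hTT2 : T ≤ T ^ 2 := by nlinarith
  have hsum : (∑ j ∈ Finset.Icc (J + 1) N, (M j : ℝ)) ≤ 10 / 3 * T ^ 2 := by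
    have hMle : ∀ j ∈ Finset.Icc (J + 1) N, (M j : ℝ) ≤ 5 * D / (3 * (j : ℝ) ^ (e + 2)) := by
      intro j hj
      exact Nat.floor_le (by positivity)
    have step1 : (∑ j ∈ Finset.Icc (J + 1) N, (M j : ℝ))
        ≤ ∑ j ∈ Finset.Icc (J + 1) N, 5 * D / (3 * (j : ℝ) ^ (e + 2)) :=
      Finset.sum_le_sum hMle
    rcases lt_or_ge N (J + 1) with hN | hN
    · rw [Finset.Icc_eq_empty (by omega)] at step1 ⊢
      simp only [Finset.sum_empty] at step1 ⊢
      have : (0:ℝ) ≤ 10 / 3 * T ^ 2 := by positivity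
      linarith
    · have hins : Finset.Icc (J + 1) N = insert (J + 1) (Finset.Icc (J + 2) N) := by
        exact (Finset.insert_Icc_add_one_left_eq_Icc (by omega)).symm
      have hnotmem : (J + 1) ∉ Finset.Icc (J + 2) N := by simp
      rw [hins, Finset.sum_insert hnotmem, Finset.sum_insert hnotmem] at step1
      -- first term
      have hJ1T : T ≤ ((J + 1 : ℕ) : ℝ) := by push_cast; linarith
      have hJ1pos : (0:ℝ) < ((J + 1 : ℕ) : ℝ) := by positivity
      have hfirst : 5 * D / (3 * ((J + 1 : ℕ) : ℝ) ^ (e + 2)) ≤ 5 / 3 * T := by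
        have hTpow : T ^ (e + 2) ≤ ((J + 1 : ℕ) : ℝ) ^ (e + 2) :=
          pow_le_pow_left₀ hT0.le hJ1T _
        have h1 : 5 * D / (3 * ((J + 1 : ℕ) : ℝ) ^ (e + 2)) ≤ 5 * D / (3 * T ^ (e + 2)) := by
          apply div_le_div_of_nonneg_left (by positivity) (by positivity)
          linarith
        calc 5 * D / (3 * ((J + 1 : ℕ) : ℝ) ^ (e + 2)) ≤ 5 * D / (3 * T ^ (e + 2)) := h1
          _ = 5 / 3 * (D / T ^ (e + 2)) := by ring
          _ = 5 / 3 * T := by rw [hDT1]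
      -- tail
      have htel := tele_sum e (J + 1) (by omega) N hN
      have hterm : ∀ j : ℕ, 0 < j → 5 * D / (3 * (j : ℝ) ^ (e + 2))
          = (5 * D / (3 * ((e : ℝ) + 1))) * (((e : ℝ) + 1) / (j : ℝ) ^ (e + 2)) := by
        intro j hj
        have : (0:ℝ) < (j : ℝ) ^ (e + 2) := by positivity
        field_simp
      have htail : (∑ j ∈ Finset.Icc (J + 2) N, 5 * D / (3 * (j : ℝ) ^ (e + 2)))
          ≤ 5 / 3 * T ^ 2 := by
        have heq : (∑ j ∈ Finset.Icc (J + 2) N, 5 * D / (3 * (j : ℝ) ^ (e + 2)))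
            = (5 * D / (3 * ((e : ℝ) + 1)))
              * ∑ j ∈ Finset.Icc (J + 2) N, ((e : ℝ) + 1) / (j : ℝ) ^ (e + 2) := by
          rw [Finset.mul_sum]
          apply Finset.sum_congr rfl
          intro j hj
          have hjpos : 0 < j := by
            have := (Finset.mem_Icc.mp hj).1; omega
          exact hterm j hjpos
        have htel2 : (∑ j ∈ Finset.Icc (J + 2) N, ((e : ℝ) + 1) / (j : ℝ) ^ (e + 2))
            ≤ 1 / ((J + 1 : ℕ) : ℝ) ^ (e + 1) := by
          have hNpow : (0:ℝ) < 1 / ((N : ℝ)) ^ (e + 1) := by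
            have : (0:ℝ) < (N : ℝ) := by
              have : 0 < N := by omega
              exact_mod_cast this
            positivity
          have htel' : (∑ j ∈ Finset.Icc (J + 2) N, ((e : ℝ) + 1) / (j : ℝ) ^ (e + 2))
              ≤ 1 / ((J + 1 : ℕ) : ℝ) ^ (e + 1) - 1 / (N : ℝ) ^ (e + 1) := by
            rw [show J + 2 = J + 1 + 1 by omega]
            exact htel
          linarith
        have hpos1 : (0:ℝ) < ((e : ℝ) + 1) := by positivity
        have hTpow : T ^ (e + 1) ≤ ((J + 1 : ℕ) : ℝ) ^ (e + 1) :=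
          pow_le_pow_left₀ hT0.le hJ1T _
        have hTpow0 : (0:ℝ) < T ^ (e + 1) := by positivity
        have hbound : 1 / ((J + 1 : ℕ) : ℝ) ^ (e + 1) ≤ 1 / T ^ (e + 1) := by
          apply div_le_div_of_nonneg_left (by norm_num) hTpow0
          linarith
        have hsum_nonneg : (0:ℝ) ≤ ∑ j ∈ Finset.Icc (J + 2) N, ((e : ℝ) + 1) / (j : ℝ) ^ (e + 2) := by
          apply Finset.sum_nonneg
          intro j _
          positivity
        calc (∑ j ∈ Finset.Icc (J + 2) N, 5 * D / (3 * (j : ℝ) ^ (e + 2)))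
            = (5 * D / (3 * ((e : ℝ) + 1)))
              * ∑ j ∈ Finset.Icc (J + 2) N, ((e : ℝ) + 1) / (j : ℝ) ^ (e + 2) := heq
          _ ≤ (5 * D / (3 * ((e : ℝ) + 1))) * (1 / T ^ (e + 1)) := by
              apply mul_le_mul_of_nonneg_left (le_trans htel2 hbound) (by positivity)
          _ ≤ (5 * D / 3) * (1 / T ^ (e + 1)) := by
              apply mul_le_mul_of_nonneg_right _ (by positivity)
              apply div_le_div_of_nonneg_left (by positivity) (by positivity)
              nlinarith [Nat.cast_nonneg (α := ℝ) e]
          _ = 5 / 3 * (D / T ^ (e + 1)) := by ring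
          _ = 5 / 3 * T ^ 2 := by rw [hDT2]
      calc (∑ j ∈ Finset.Icc (J + 1) N, (M j : ℝ))
          = ((M (J + 1) : ℕ) : ℝ) + ∑ j ∈ Finset.Icc (J + 2) N, (M j : ℝ) := by
            rw [hins, Finset.sum_insert hnotmem]
        _ ≤ 5 * D / (3 * ((J + 1 : ℕ) : ℝ) ^ (e + 2))
            + ∑ j ∈ Finset.Icc (J + 2) N, 5 * D / (3 * (j : ℝ) ^ (e + 2)) := step1
        _ ≤ 5 / 3 * T + 5 / 3 * T ^ 2 := add_le_add hfirst htail
        _ ≤ 10 / 3 * T ^ 2 := by linarith [mul_le_mul_of_nonneg_left hTT2 (by norm_num : (0:ℝ) ≤ 5/3)]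
  have hJK : ((J * K : ℕ) : ℝ) ≤ 6 * T ^ 2 := by
    push_cast
    calc (J : ℝ) * K ≤ T * (6 * T) := by
          apply mul_le_mul hJT hK (by positivity) hT0.le
      _ = 6 * T ^ 2 := by ring
  have hfinal : (S.ncard : ℝ) ≤ 6 * T ^ 2 + 10 / 3 * T ^ 2 := by
    have h1 : (S.ncard : ℝ) ≤ ((F1 ∪ F2).card : ℝ) := by exact_mod_cast hcard
    have h2 : ((F1 ∪ F2).card : ℝ) ≤ (F1.card : ℝ) + (F2.card : ℝ) := by
      exact_mod_cast Finset.card_union_le F1 F2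
    have h3 : (F1.card : ℝ) ≤ 6 * T ^ 2 := by rw [hF1card]; exact hJK
    have h4 : (F2.card : ℝ) ≤ 10 / 3 * T ^ 2 := by
      calc (F2.card : ℝ) ≤ ((∑ j ∈ Finset.Icc (J + 1) N, M j : ℕ) : ℝ) := by
            exact_mod_cast hF2n
        _ = ∑ j ∈ Finset.Icc (J + 1) N, (M j : ℝ) := by push_cast; rfl
        _ ≤ 10 / 3 * T ^ 2 := hsum
    linarith
  have hgoal : 16 * D ^ ((2:ℝ) / ((e + 3 : ℕ) : ℝ)) = 16 * T ^ 2 := by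
    rw [hT2]; push_cast; ring_nf
  calc (S.ncard : ℝ) ≤ 6 * T ^ 2 + 10 / 3 * T ^ 2 := hfinal
    _ ≤ 16 * T ^ 2 := by nlinarith
    _ = 16 * D ^ ((2:ℝ) / ((e + 3 : ℕ) : ℝ)) := hgoal.symm
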